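/- Let 1/3 < K < 1, μ = (3K−1)/(1−K), u₀ ∈ ℝ, and let u : (0,1] → ℝ be differentiable, satisfy the background ODE u'(t) = K μ t^{2μ−1} / (t^{2μ} + (1−K) e^{2u(t)}) on (0,1], and u(1) = u₀. Then the limit u(0) := lim_{t→0⁺} u(t) exists and there is a constant C > 0 (depending only on K and u₀) such that |u(t) − u(0)| ≤ C t^{2μ} for all t ∈ (0,1]. -/

import Mathlib

open Set Filter Real

/-- The limit `u(0) = lim_{t → 0⁺} u(t)` exists and `|u(t) − u(0)| ≤ C t^{2μ}`. -/
theorem stmt2 (K μ u₀ : ℝ) (hK : 1/3 < K) (hK' : K < 1)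
    (hμ : μ = (3*K - 1)/(1 - K))
    (u : ℝ → ℝ)
    (hode : ∀ t ∈ Set.Ioc (0:ℝ) 1,
      HasDerivAt u
        (K * μ * t ^ (2*μ - 1) / (t ^ (2*μ) + (1 - K) * Real.exp (2 * u t))) t)
    (hinit : u 1 = u₀) :
    ∃ L : ℝ, Filter.Tendsto u (nhdsWithin 0 (Set.Ioi 0)) (nhds L) ∧
      ∃ C : ℝ, 0 < C ∧ ∀ t ∈ Set.Ioc (0:ℝ) 1, |u t - L| ≤ C * t ^ (2*μ) := by
  have hKpos : 0 < K := by linarith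
  have h1K : 0 < 1 - K := by linarith
  have hμpos : 0 < μ := by
    rw [hμ]; exact div_pos (by linarith) h1K
  have hden : ∀ t ∈ Set.Ioc (0:ℝ) 1, 0 < t ^ (2*μ) + (1 - K) * Real.exp (2 * u t) :=
    fun t ht => add_pos (Real.rpow_pos_of_pos ht.1 _) (mul_pos h1K (Real.exp_pos _))
  have hderiv_pos : ∀ t ∈ Set.Ioc (0:ℝ) 1,
      0 < K * μ * t ^ (2*μ - 1) / (t ^ (2*μ) + (1 - K) * Real.exp (2 * u t)) :=
    fun t ht => div_pos (mul_pos (mul_pos hKpos hμpos) (Real.rpow_pos_of_pos ht.1 _)) (hden t ht)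
  have hcont : ContinuousOn u (Set.Ioc (0:ℝ) 1) :=
    fun t ht => (hode t ht).continuousAt.continuousWithinAt
  have hmono : MonotoneOn u (Set.Ioc (0:ℝ) 1) := by
    apply (strictMonoOn_of_deriv_pos (convex_Ioc 0 1) hcont ?_).monotoneOn
    intro t ht
    rw [interior_Ioc] at ht
    have ht' : t ∈ Set.Ioc (0:ℝ) 1 := Set.Ioo_subset_Ioc_self ht
    rw [(hode t ht').deriv]
    exact hderiv_pos t ht'
  have h1S : (1:ℝ) ∈ Set.Ioc (0:ℝ) 1 := Set.right_mem_Ioc.2 one_pos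
  -- the conserved quantity g
  set g : ℝ → ℝ := fun t => 2 * u t - K * Real.log (t ^ (2*μ) + Real.exp (2 * u t)) with hg
  have hgderiv : ∀ t ∈ Set.Ioc (0:ℝ) 1, HasDerivAt g 0 t := by
    intro t ht
    have h1 : HasDerivAt (fun t : ℝ => t ^ (2*μ)) (2*μ * t ^ (2*μ - 1)) t :=
      Real.hasDerivAt_rpow_const (Or.inl (ne_of_gt ht.1))
    have hu := hode t ht
    set u' := K * μ * t ^ (2*μ - 1) / (t ^ (2*μ) + (1 - K) * Real.exp (2 * u t)) with hu'
    have h2 : HasDerivAt (fun t => Real.exp (2 * u t)) (Real.exp (2 * u t) * (2 * u')) t :=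
      (hu.const_mul 2).exp
    have h3 : HasDerivAt (fun t => t ^ (2*μ) + Real.exp (2 * u t))
        (2*μ * t ^ (2*μ - 1) + Real.exp (2 * u t) * (2 * u')) t := h1.add h2
    have hpos : 0 < t ^ (2*μ) + Real.exp (2 * u t) :=
      add_pos (Real.rpow_pos_of_pos ht.1 _) (Real.exp_pos _)
    have h4 : HasDerivAt (fun t => Real.log (t ^ (2*μ) + Real.exp (2 * u t)))
        ((2*μ * t ^ (2*μ - 1) + Real.exp (2 * u t) * (2 * u')) /
          (t ^ (2*μ) + Real.exp (2 * u t))) t := h3.log (ne_of_gt hpos)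
    have h5 := (hu.const_mul 2).sub (h4.const_mul K)
    convert h5 using 1
    any_goals rfl
    rw [hu']
    have hD : t ^ (2*μ) + (1 - K) * Real.exp (2 * u t) ≠ 0 := ne_of_gt (hden t ht)
    field_simp
    ring
  have hanti : AntitoneOn g (Set.Ioc (0:ℝ) 1) := by
    apply antitoneOn_of_deriv_nonpos (convex_Ioc 0 1)
    · intro t ht; exact (hgderiv t ht).continuousAt.continuousWithinAt
    · intro t ht
      rw [interior_Ioc] at ht
      exact ((hgderiv t (Set.Ioo_subset_Ioc_self ht)).differentiableAt).differentiableWithinAt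
    · intro t ht
      rw [interior_Ioc] at ht
      rw [(hgderiv t (Set.Ioo_subset_Ioc_self ht)).deriv]
  -- lower bound for u
  set L₀ : ℝ := (2*u₀ - K * Real.log (1 + Real.exp (2*u₀))) / (2*(1-K)) with hL₀
  have hlb : ∀ t ∈ Set.Ioc (0:ℝ) 1, L₀ ≤ u t := by
    intro t ht
    have hgt : g 1 ≤ g t := hanti ht h1S ht.2
    have hpos : 0 < t ^ (2*μ) + Real.exp (2 * u t) :=
      add_pos (Real.rpow_pos_of_pos ht.1 _) (Real.exp_pos _)
    have hlog : 2 * u t ≤ Real.log (t ^ (2*μ) + Real.exp (2 * u t)) :=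
      (Real.le_log_iff_exp_le hpos).2
        (le_add_of_nonneg_left (Real.rpow_nonneg ht.1.le _))
    have hgt' : 2*u₀ - K * Real.log (1 + Real.exp (2*u₀)) ≤
        2 * u t - K * Real.log (t ^ (2*μ) + Real.exp (2 * u t)) := by
      simpa only [hg, hinit, Real.one_rpow] using hgt
    rw [hL₀, div_le_iff₀ (by positivity)]
    have := mul_le_mul_of_nonneg_left hlog hKpos.le
    linarith
  -- the limit
  have hmono' : MonotoneOn u (Set.Ioo (0:ℝ) 1) := hmono.mono Set.Ioo_subset_Ioc_self
  have hbdd : BddBelow (u '' Set.Ioo (0:ℝ) 1) := by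
    refine ⟨L₀, ?_⟩
    rintro y ⟨t, ht, rfl⟩
    exact hlb t (Set.Ioo_subset_Ioc_self ht)
  set L : ℝ := sInf (u '' Set.Ioo (0:ℝ) 1) with hL
  have htend : Filter.Tendsto u (nhdsWithin 0 (Set.Ioi 0)) (nhds L) :=
    MonotoneOn.tendsto_nhdsWithin_Ioo_right ⟨1/2, by norm_num⟩ hmono' hbdd
  have hL_le : ∀ t ∈ Set.Ioc (0:ℝ) 1, L ≤ u t := by
    intro t ht
    rcases eq_or_lt_of_le ht.2 with h | h
    · have : L ≤ u (1/2) := csInf_le hbdd ⟨1/2, by norm_num, rfl⟩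
      refine this.trans (hmono (by norm_num) ht ?_)
      rw [h]; norm_num
    · exact csInf_le hbdd ⟨t, ⟨ht.1, h⟩, rfl⟩
  refine ⟨L, htend, K / (2*(1-K)*Real.exp (2*L)), by positivity, ?_⟩
  set C : ℝ := K / (2*(1-K)*Real.exp (2*L)) with hC
  have hCpos : 0 < C := by rw [hC]; positivity
  -- the auxiliary monotone function φ
  have hφmono : MonotoneOn (fun t => C * t ^ (2*μ) - u t) (Set.Ioc (0:ℝ) 1) := by
    have hφd : ∀ t ∈ Set.Ioc (0:ℝ) 1, HasDerivAt (fun t => C * t ^ (2*μ) - u t)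
        (C * (2*μ * t ^ (2*μ - 1)) -
          K * μ * t ^ (2*μ - 1) / (t ^ (2*μ) + (1 - K) * Real.exp (2 * u t))) t := by
      intro t ht
      exact ((Real.hasDerivAt_rpow_const (Or.inl (ne_of_gt ht.1))).const_mul C).sub (hode t ht)
    apply monotoneOn_of_deriv_nonneg (convex_Ioc 0 1)
    · intro t ht; exact (hφd t ht).continuousAt.continuousWithinAt
    · intro t ht
      rw [interior_Ioc] at ht
      exact ((hφd t (Set.Ioo_subset_Ioc_self ht)).differentiableAt).differentiableWithinAt
    · intro t ht
      rw [interior_Ioc] at ht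
      have ht' : t ∈ Set.Ioc (0:ℝ) 1 := Set.Ioo_subset_Ioc_self ht
      rw [(hφd t ht').deriv]
      have hA : (0:ℝ) ≤ K * μ * t ^ (2*μ - 1) :=
        le_of_lt (mul_pos (mul_pos hKpos hμpos) (Real.rpow_pos_of_pos ht.1 _))
      have hDl : (1 - K) * Real.exp (2*L) ≤ t ^ (2*μ) + (1 - K) * Real.exp (2 * u t) := by
        have h1 : Real.exp (2*L) ≤ Real.exp (2 * u t) :=
          Real.exp_le_exp.2 (by linarith [hL_le t ht'])
        have h2 : (0:ℝ) ≤ t ^ (2*μ) := Real.rpow_nonneg ht.1.le _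
        nlinarith
      have hstep : K * μ * t ^ (2*μ - 1) / (t ^ (2*μ) + (1 - K) * Real.exp (2 * u t)) ≤
          K * μ * t ^ (2*μ - 1) / ((1 - K) * Real.exp (2*L)) :=
        div_le_div_of_nonneg_left hA (by positivity) hDl
      have heq : K * μ * t ^ (2*μ - 1) / ((1 - K) * Real.exp (2*L)) =
          C * (2*μ * t ^ (2*μ - 1)) := by
        rw [hC]; field_simp
      linarith [heq ▸ hstep]
  intro t ht
  have hnn : 0 ≤ u t - L := sub_nonneg.2 (hL_le t ht)
  rw [abs_of_nonneg hnn]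
  -- u t - u s ≤ C * t^(2μ) for s ∈ (0, t]
  have hkey : ∀ s ∈ Set.Ioc (0:ℝ) t, u t - u s ≤ C * t ^ (2*μ) := by
    intro s hs
    have hsS : s ∈ Set.Ioc (0:ℝ) 1 := ⟨hs.1, hs.2.trans ht.2⟩
    have := hφmono hsS ht hs.2
    have hsp : (0:ℝ) ≤ C * s ^ (2*μ) :=
      mul_nonneg hCpos.le (Real.rpow_nonneg hs.1.le _)
    simp only at this
    linarith
  have htend2 : Filter.Tendsto (fun s => u t - u s) (nhdsWithin 0 (Set.Ioi 0))
      (nhds (u t - L)) := tendsto_const_nhds.sub htend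
  have hev : ∀ᶠ s in nhdsWithin 0 (Set.Ioi 0), u t - u s ≤ C * t ^ (2*μ) := by
    filter_upwards [Ioc_mem_nhdsGT_of_mem ⟨le_refl (0:ℝ), ht.1⟩] with s hs
    exact hkey s hs
  exact le_of_tendsto htend2 hev
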